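/- Let (R,m) be a one-dimensional Cohen–Macaulay local ring and I a regular ideal. Then I is isomorphic to I² as an R-module if and only if I² = xI for some nonzerodivisor x ∈ I. -/

import Mathlib

open nonZeroDivisors IsLocalRing

section Aux

variable {R : Type*} [CommRing R]

/-- Cancellation of multiplication by a regular principal ideal. -/
private lemma span_regular_mul_le_cancel {a : R} (ha : a ∈ R⁰) {X Y : Ideal R}
    (h : Ideal.span {a} * X ≤ Ideal.span {a} * Y) : X ≤ Y := by
  intro z hz
  have hz' : a * z ∈ Ideal.span {a} * Y :=
    h (Ideal.mul_mem_mul (Ideal.mem_span_singleton_self a) hz)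
  obtain ⟨w, hw, hwz⟩ := Ideal.mem_span_singleton_mul.mp hz'
  have h0 : (w - z) * a = 0 := by
    have : a * w - a * z = 0 := by rw [hwz, sub_self]
    calc (w - z) * a = a * w - a * z := by ring
      _ = 0 := this
  have : w - z = 0 := mem_nonZeroDivisors_iff_right.mp ha _ h0
  rwa [sub_eq_zero.mp this] at hw


/-- A finitely generated idempotent submodule of an `R`-algebra containing a
unit must contain `1` (determinant trick / Nakayama). -/
private lemma one_mem_of_idempotent_submodule {R A : Type*} [CommRing R] [IsNoetherianRing R]
    [CommRing A] [Algebra R A] (K : Submodule R A) (hKK : K * K = K) (hKfg : K.FG)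
    {q : A} (hq : q ∈ K) (hqu : IsUnit q) : (1 : A) ∈ K := by
  set D : Submodule R A := 1 ⊔ K with hD
  have hDK : ∀ d k : A, d ∈ D → k ∈ K → d * k ∈ K := by
    intro d k hd hk
    have hDKmul : D * K = K := by
      rw [hD, Submodule.sup_mul, Submodule.one_mul, hKK, sup_idem]
    exact hDKmul ▸ Submodule.mul_mem_mul hd hk
  have h1D : (1 : A) ∈ D := Submodule.one_le.mp le_sup_left
  have hmulD : ∀ x y : A, x ∈ D → y ∈ D → x * y ∈ D := by
    intro x y hx hy
    have hDD : D * D = D := by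
      rw [hD, Submodule.sup_mul, Submodule.one_mul, Submodule.mul_sup, Submodule.mul_one,
        hKK, sup_idem, sup_assoc, sup_idem]
    exact hDD ▸ Submodule.mul_mem_mul hx hy
  set S : Subalgebra R A := D.toSubalgebra h1D hmulD with hS
  have hKD : K ≤ D := le_sup_right
  have hDfg : D.FG := by
    refine Submodule.FG.sup ?_ hKfg
    rw [Submodule.one_eq_span]
    exact Submodule.fg_span_singleton 1
  have hNS : IsNoetherian R S := isNoetherian_of_fg_of_noetherian D hDfg
  haveI hNRS : IsNoetherianRing S := isNoetherian_of_tower R hNS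
  let KS : Ideal S := {
    carrier := {x : S | (x : A) ∈ K}
    add_mem' := fun hx hy => K.add_mem hx hy
    zero_mem' := K.zero_mem
    smul_mem' := fun c x hx => hDK _ _ c.2 hx }
  have hKSfg : KS.FG := IsNoetherian.noetherian KS
  have hle : KS ≤ KS • KS := by
    intro x hx
    have hx' : (x : A) ∈ K * K := by rw [hKK]; exact hx
    have hT : K * K ≤ Submodule.map S.val.toLinearMap
        (Submodule.restrictScalars R ((KS * KS : Ideal S) : Submodule S S)) := by
      refine Submodule.mul_le.mpr ?_
      intro k1 hk1 k2 hk2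
      exact ⟨(⟨k1, hKD hk1⟩ : S) * ⟨k2, hKD hk2⟩, Ideal.mul_mem_mul hk1 hk2, rfl⟩
    obtain ⟨y, hy, hyx⟩ := hT hx'
    rw [Ideal.smul_eq_mul]
    rwa [show y = x from Subtype.ext hyx] at hy
  obtain ⟨r, hr1, hr0⟩ :=
    Submodule.exists_sub_one_mem_and_smul_eq_zero_of_fg_of_le_smul KS KS hKSfg hle
  have hqS : q ∈ S := hKD hq
  have hrq : r • (⟨q, hqS⟩ : S) = 0 := hr0 _ hq
  have hrq' : (r : A) * q = 0 := congrArg Subtype.val hrq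
  have hrz : (r : A) = 0 := by
    refine hqu.mul_left_cancel ?_
    rw [mul_zero, mul_comm, hrq']
  have hrS : r = 0 := Subtype.ext hrz
  rw [hrS] at hr1
  have h2 : ((0 - 1 : S) : A) ∈ K := hr1
  rw [zero_sub] at h2
  have h2' : (-1 : A) ∈ K := by
    have hc : ((-1 : S) : A) = -1 := by push_cast; ring
    rwa [hc] at h2
  have := K.neg_mem h2'
  rwa [neg_neg] at this

/-- The key lemma: if `a` is a regular element of `I`, `b` is regular and
`a·I² = b·I`, then `b ∈ a·I`.  (This is the determinant-trick/Nakayama step,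
carried out inside the total ring of fractions.) -/
private lemma exists_eq_mul_of_span_mul_eq [IsNoetherianRing R] {I : Ideal R}
    {a b : R} (ha : a ∈ R⁰) (haI : a ∈ I) (hb : b ∈ R⁰)
    (hab : Ideal.span {a} * I ^ 2 = Ideal.span {b} * I) :
    ∃ y ∈ I, a * y = b := by
  classical
  set Q := FractionRing R with hQ
  let f : R →ₐ[R] Q := Algebra.ofId R Q
  have finj : Function.Injective f := IsFractionRing.injective R Q
  have hau : IsUnit (f a) := IsLocalization.map_units Q ⟨a, ha⟩
  have hbu : IsUnit (f b) := IsLocalization.map_units Q ⟨b, hb⟩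
  set β : Q := ↑hbu.unit⁻¹ with hβ
  have hβB : β * f b = 1 := by
    rw [hβ]
    have := hbu.unit.inv_mul
    rwa [IsUnit.unit_spec] at this
  set m : Submodule R Q := Submodule.map f.toLinearMap I with hm_def
  have spmul : ∀ x y : Q,
      Submodule.span R {x} * Submodule.span R {y} = Submodule.span R {x * y} := by
    intro x y
    rw [Submodule.span_mul_span, Set.singleton_mul_singleton]
  have hmsp : ∀ x : R,
      Submodule.map f.toLinearMap ((Ideal.span {x} : Ideal R) : Submodule R R)
        = Submodule.span R {f x} := by
    intro x
    show Submodule.map f.toLinearMap (Submodule.span R ({x} : Set R)) = _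
    rw [Submodule.map_span, Set.image_singleton]
    rfl
  have habQ : Submodule.span R {f a} * (m * m) = Submodule.span R {f b} * m := by
    have h1 := congrArg (Submodule.map f.toLinearMap) hab
    rw [sq] at h1
    rw [Submodule.map_mul, Submodule.map_mul, Submodule.map_mul, hmsp, hmsp] at h1
    exact h1
  set K : Submodule R Q := Submodule.span R {β * f a} * m with hK
  have hKK : K * K = K := by
    have e0 : (β * f a) * (β * f a) = (β * β * f a) * (f a) := by ring
    have e1 : (β * β * f a) * f b = β * f a := by
      have h6 : (β * β * f a) * f b = (β * f b) * (β * f a) := by ring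
      rw [h6, hβB, one_mul]
    calc K * K = Submodule.span R {(β * f a) * (β * f a)} * (m * m) := by
          rw [hK, mul_mul_mul_comm, spmul]
      _ = Submodule.span R {β * β * f a} * Submodule.span R {f a} * (m * m) := by
          rw [e0, ← spmul]
      _ = Submodule.span R {β * β * f a} * (Submodule.span R {f a} * (m * m)) := by
          rw [mul_assoc]
      _ = Submodule.span R {β * β * f a} * (Submodule.span R {f b} * m) := by rw [habQ]
      _ = Submodule.span R {(β * β * f a) * f b} * m := by rw [← mul_assoc, spmul]
      _ = K := by rw [e1, hK]
  have hfa_m : f a ∈ m := Submodule.mem_map_of_mem haI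
  have hq0 : (β * f a) * f a ∈ K :=
    Submodule.mul_mem_mul (Submodule.mem_span_singleton_self _) hfa_m
  have hq0u : IsUnit ((β * f a) * f a) := ((hbu.unit⁻¹.isUnit.mul hau).mul hau)
  have hKfg : K.FG :=
    Submodule.FG.mul (Submodule.fg_span_singleton _) ((IsNoetherian.noetherian I).map _)
  have h1K : (1 : Q) ∈ K := one_mem_of_idempotent_submodule K hKK hKfg hq0 hq0u
  rw [hK] at h1K
  obtain ⟨z, hz, hz1⟩ := Submodule.mem_span_singleton_mul.mp h1K
  obtain ⟨y, hyI, rfl⟩ := hz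
  refine ⟨y, hyI, finj ?_⟩
  have hβB' : f b * β = 1 := by rw [mul_comm]; exact hβB
  calc f (a * y) = f a * f y := map_mul f a y
    _ = (f b * β) * (f a * f y) := by rw [hβB', one_mul]
    _ = f b * ((β * f a) * f.toLinearMap y) := by rw [AlgHom.toLinearMap_apply]; ring
    _ = f b * 1 := by rw [hz1]
    _ = f b := mul_one _

end Aux

/-- Let `(R,m)` be a one-dimensional Cohen–Macaulay local ring and `I` a regular
ideal.  Then `I ≅ I²` as `R`-modules if and only if `I² = xI` for some
nonzerodivisor `x ∈ I`. -/
theorem iso_sq_iff_stable (R : Type*) [CommRing R] [IsLocalRing R] [IsNoetherianRing R]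
    (hdim : ringKrullDim R = 1)
    (hCM : ∃ r ∈ maximalIdeal R, r ∈ R⁰)
    (I : Ideal R) (hreg : ∃ x ∈ I, x ∈ R⁰) :
    Nonempty (I ≃ₗ[R] (I ^ 2 : Ideal R)) ↔
      ∃ x ∈ I, x ∈ R⁰ ∧ I ^ 2 = Ideal.span {x} * I := by
  constructor
  · rintro ⟨φ⟩
    obtain ⟨a, haI, ha⟩ := hreg
    set b : R := (φ ⟨a, haI⟩ : R) with hb_def
    have hbI2 : b ∈ I ^ 2 := (φ ⟨a, haI⟩).2
    have key : ∀ (y : R) (hy : y ∈ I), a * ((φ ⟨y, hy⟩ : (I ^ 2 : Ideal R)) : R) = y * b := by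
      intro y hy
      have h2 : ((a : R) • (⟨y, hy⟩ : I)) = (y • ⟨a, haI⟩ : I) :=
        Subtype.ext (by simp [smul_eq_mul, mul_comm])
      have h3 : a • φ ⟨y, hy⟩ = y • φ ⟨a, haI⟩ := by
        rw [← map_smul, h2, map_smul]
      have h4 := congrArg Subtype.val h3
      simpa [smul_eq_mul] using h4
    -- b is a nonzerodivisor
    have hb : b ∈ R⁰ := by
      refine mem_nonZeroDivisors_iff_right.mpr fun c hc => ?_
      have hcz : ∀ z ∈ I ^ 2, c * z = 0 := by
        intro z hz
        obtain ⟨y', hy'⟩ := φ.surjective ⟨z, hz⟩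
        have hz' : ((φ y' : (I ^ 2 : Ideal R)) : R) = z := congrArg Subtype.val hy'
        have h5 : a * z = (y' : R) * b := by
          rw [← hz']
          exact key y' y'.2
        have h6 : (c * z) * a = 0 := by
          have : c * (a * z) = 0 := by rw [h5, show c * ((y' : R) * b) = (y' : R) * (c * b) by ring, hc, mul_zero]
          calc (c * z) * a = c * (a * z) := by ring
            _ = 0 := this
        exact mem_nonZeroDivisors_iff_right.mp ha _ h6
      have ha2 : a * a ∈ I ^ 2 := by
        rw [sq]
        exact Ideal.mul_mem_mul haI haI
      have := hcz (a * a) ha2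
      have h7 : (c * a) * a = 0 := by rw [mul_assoc]; exact this
      exact mem_nonZeroDivisors_iff_right.mp ha _ (mem_nonZeroDivisors_iff_right.mp ha _ h7)
    -- the conductor relation a·I² = b·I
    have hab : Ideal.span {a} * I ^ 2 = Ideal.span {b} * I := by
      apply le_antisymm
      · rw [Ideal.span_singleton_mul_le_iff]
        intro z hz
        obtain ⟨y', hy'⟩ := φ.surjective ⟨z, hz⟩
        have hz' : ((φ y' : (I ^ 2 : Ideal R)) : R) = z := congrArg Subtype.val hy'
        have h5 : a * z = b * (y' : R) := by
          rw [← hz', key y' y'.2]; ring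
        rw [h5]
        exact Ideal.mul_mem_mul (Ideal.mem_span_singleton_self b) y'.2
      · rw [Ideal.span_singleton_mul_le_iff]
        intro y hy
        have h5 : b * y = a * ((φ ⟨y, hy⟩ : (I ^ 2 : Ideal R)) : R) := by
          rw [key y hy]; ring
        rw [h5]
        exact Ideal.mul_mem_mul (Ideal.mem_span_singleton_self a) (φ ⟨y, hy⟩).2
    obtain ⟨y, hyI, hay⟩ := exists_eq_mul_of_span_mul_eq ha haI hb hab
    refine ⟨y, hyI, ?_, ?_⟩
    · refine mem_nonZeroDivisors_iff_right.mpr fun c hc => ?_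
      have : c * b = 0 := by
        rw [← hay, show c * (a * y) = (c * y) * a by ring, hc, zero_mul]
      exact mem_nonZeroDivisors_iff_right.mp hb _ this
    · have hspan : Ideal.span {b} = Ideal.span {a} * Ideal.span {y} := by
        rw [Ideal.span_singleton_mul_span_singleton, hay]
      rw [hspan, mul_assoc] at hab
      exact le_antisymm (span_regular_mul_le_cancel ha hab.le)
        (span_regular_mul_le_cancel ha hab.ge)
  · rintro ⟨x, hxI, hx, heq⟩
    have hmem : ∀ y : I, x * (y : R) ∈ I ^ 2 := by
      intro y
      rw [sq]
      exact Ideal.mul_mem_mul hxI y.2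
    let ℓ : I →ₗ[R] (I ^ 2 : Ideal R) := {
      toFun := fun y => ⟨x * y, hmem y⟩
      map_add' := fun y z => Subtype.ext (by simp [mul_add])
      map_smul' := fun c y => Subtype.ext (by simp [smul_eq_mul]; ring) }
    refine ⟨LinearEquiv.ofBijective ℓ ⟨?_, ?_⟩⟩
    · intro y z h
      have h1 : x * (y : R) = x * (z : R) := congrArg Subtype.val h
      have h2 : (y : R) * x = (z : R) * x := by rw [mul_comm (y : R), mul_comm (z : R)]; exact h1
      exact Subtype.ext ((mul_cancel_right_mem_nonZeroDivisors hx).mp h2)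
    · rintro ⟨z, hz⟩
      rw [heq] at hz
      obtain ⟨w, hwI, hwx⟩ := Ideal.mem_span_singleton_mul.mp hz
      exact ⟨⟨w, hwI⟩, Subtype.ext hwx⟩
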